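/- arXiv:2605.21966 — 2 statements merged into one kernel-verified Lean document; each statement's English description precedes it below -/
import Mathlib

section
/- Let (Omega, P) be a probability space and M : Omega x (0,infinity) -> Z_{>=0} be such that for each fixed V, M(V) is measurable with E[M(V)] = V and E[(M(V)-V)^2] <= C_0 * V. Fix s > 0, theta > 1, eta > 0, and let E be the event that M(s) > 0 and M(theta^j * s) <= (1+eta)*theta^j*s for all integers j >= 0. Then P(Omega \ E) <= (C_0/s) * (1 + 1/(eta^2 * (1 - 1/theta))). -/
open MeasureTheory

lemma cheb_aux {Ω : Type*} [MeasurableSpace Ω] (P : Measure Ω) [IsProbabilityMeasure P]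
    (f : Ω → ℝ) (hf : ∀ ω, 0 ≤ f ω) (hfi : Integrable f P) (c B : ℝ) (hc : 0 < c)
    (hB : ∫ ω, f ω ∂P ≤ B) (A : Set Ω) (hA : A ⊆ {ω | c ≤ f ω}) :
    P A ≤ ENNReal.ofReal (B / c) := by
  have h1 : P A ≤ P {ω | c ≤ f ω} := measure_mono hA
  have h2 : c * (P {ω | c ≤ f ω}).toReal ≤ ∫ ω, f ω ∂P :=
    mul_meas_ge_le_integral_of_nonneg (Filter.Eventually.of_forall hf) hfi c
  have h3 : (P {ω | c ≤ f ω}).toReal ≤ B / c := by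
    rw [le_div_iff₀ hc]; linarith [mul_comm c (P {ω | c ≤ f ω}).toReal]
  refine h1.trans ?_
  rw [← ENNReal.ofReal_toReal (measure_ne_top P _)]
  exact ENNReal.ofReal_le_ofReal h3

/-- Probability of the pivot event: if the counting process `M(V)` has mean `V` and
variance at most `C₀ V`, then the event `E = {M(s) > 0 and M(θʲ s) ≤ (1+η) θʲ s for all j ≥ 0}`
satisfies `P(Eᶜ) ≤ (C₀/s)(1 + 1/(η²(1 - 1/θ)))`. -/
theorem stmt4 {Ω : Type*} [MeasurableSpace Ω] (P : Measure Ω) [IsProbabilityMeasure P]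
    (M : ℝ → Ω → ℕ) (C₀ : ℝ)
    (hmeas : ∀ V : ℝ, 0 < V → Measurable fun ω => M V ω)
    (hmean : ∀ V : ℝ, 0 < V → ∫ ω, (M V ω : ℝ) ∂P = V)
    (hint : ∀ V : ℝ, 0 < V → Integrable (fun ω => ((M V ω : ℝ) - V) ^ 2) P)
    (hvar : ∀ V : ℝ, 0 < V → ∫ ω, ((M V ω : ℝ) - V) ^ 2 ∂P ≤ C₀ * V)
    (s θ η : ℝ) (hs : 0 < s) (hθ : 1 < θ) (hη : 0 < η) :
    (P ({ω | 0 < M s ω ∧ ∀ j : ℕ, (M (θ ^ j * s) ω : ℝ) ≤ (1 + η) * θ ^ j * s}ᶜ)).toReal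
      ≤ (C₀ / s) * (1 + 1 / (η ^ 2 * (1 - 1 / θ))) := by
  have hθ0 : 0 < θ := lt_trans one_pos hθ
  have hV : ∀ j : ℕ, 0 < θ ^ j * s := fun j => mul_pos (pow_pos hθ0 j) hs
  have hC₀ : 0 ≤ C₀ := by
    have h1 : 0 ≤ ∫ ω, ((M s ω : ℝ) - s) ^ 2 ∂P :=
      integral_nonneg fun ω => sq_nonneg _
    nlinarith [hvar s hs]
  have hr0 : (0:ℝ) ≤ 1/θ := by positivity
  have hr1 : 1/θ < 1 := by rw [div_lt_one hθ0]; exact hθ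
  have hden : 0 < 1 - 1/θ := by linarith
  set A : Set Ω := {ω | M s ω = 0} with hA
  set B : ℕ → Set Ω := fun j => {ω | (1 + η) * θ ^ j * s < (M (θ ^ j * s) ω : ℝ)} with hB
  -- inclusion of complement
  have hsub : ({ω | 0 < M s ω ∧ ∀ j : ℕ,
      (M (θ ^ j * s) ω : ℝ) ≤ (1 + η) * θ ^ j * s}ᶜ) ⊆ A ∪ ⋃ j, B j := by
    intro ω hω
    simp only [Set.mem_compl_iff, Set.mem_setOf_eq, not_and, not_forall, not_le] at hω
    by_cases h0 : 0 < M s ω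
    · obtain ⟨j, hj⟩ := hω h0
      exact Or.inr (Set.mem_iUnion.mpr ⟨j, hj⟩)
    · exact Or.inl (Nat.eq_zero_of_not_pos h0)
  -- bound on A
  have hPA : P A ≤ ENNReal.ofReal (C₀ * s / s ^ 2) := by
    refine cheb_aux P _ (fun ω => sq_nonneg _) (hint s hs) (s ^ 2) (C₀ * s)
      (by positivity) (hvar s hs) A ?_
    intro ω hω
    simp only [hA, Set.mem_setOf_eq] at hω ⊢
    rw [hω]
    simp
  -- bound on each B j
  have hPB : ∀ j : ℕ, P (B j) ≤ ENNReal.ofReal (C₀ / (η ^ 2 * s) * (1/θ) ^ j) := by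
    intro j
    have hVj := hV j
    have heq : C₀ * (θ ^ j * s) / (η * (θ ^ j * s)) ^ 2
        = C₀ / (η ^ 2 * s) * (1/θ) ^ j := by
      have h1 : θ ^ j ≠ 0 := by positivity
      field_simp
      rw [mul_assoc, ← mul_pow, mul_one_div_cancel hθ0.ne', one_pow, mul_one]
    rw [← heq]
    refine cheb_aux P _ (fun ω => sq_nonneg _) (hint _ hVj) _ _
      (by positivity) (hvar _ hVj) (B j) ?_
    intro ω hω
    simp only [hB, Set.mem_setOf_eq] at hω ⊢
    have h2 : η * (θ ^ j * s) ≤ (M (θ ^ j * s) ω : ℝ) - θ ^ j * s := by nlinarith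
    calc (η * (θ ^ j * s)) ^ 2 ≤ ((M (θ ^ j * s) ω : ℝ) - θ ^ j * s) ^ 2 := by
          apply sq_le_sq'
          · nlinarith
          · exact h2
      _ = _ := rfl
  -- sum up
  have hsum : ∑' j : ℕ, P (B j) ≤ ENNReal.ofReal (C₀ / (η ^ 2 * s) * (1 - 1/θ)⁻¹) := by
    calc ∑' j : ℕ, P (B j)
        ≤ ∑' j : ℕ, ENNReal.ofReal (C₀ / (η ^ 2 * s) * (1/θ) ^ j) :=
          ENNReal.tsum_le_tsum hPB
      _ = ENNReal.ofReal (∑' j : ℕ, C₀ / (η ^ 2 * s) * (1/θ) ^ j) :=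
          (ENNReal.ofReal_tsum_of_nonneg (fun j => by positivity)
            ((summable_geometric_of_lt_one hr0 hr1).mul_left _)).symm
      _ = ENNReal.ofReal (C₀ / (η ^ 2 * s) * (1 - 1/θ)⁻¹) := by
          rw [tsum_mul_left, tsum_geometric_of_lt_one hr0 hr1]
  have hmain : P ({ω | 0 < M s ω ∧ ∀ j : ℕ,
      (M (θ ^ j * s) ω : ℝ) ≤ (1 + η) * θ ^ j * s}ᶜ)
      ≤ ENNReal.ofReal ((C₀ / s) * (1 + 1 / (η ^ 2 * (1 - 1 / θ)))) := by
    calc P _ ≤ P (A ∪ ⋃ j, B j) := measure_mono hsub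
      _ ≤ P A + P (⋃ j, B j) := measure_union_le _ _
      _ ≤ P A + ∑' j : ℕ, P (B j) := add_le_add_right (measure_iUnion_le _) _
      _ ≤ ENNReal.ofReal (C₀ * s / s ^ 2)
          + ENNReal.ofReal (C₀ / (η ^ 2 * s) * (1 - 1/θ)⁻¹) := add_le_add hPA hsum
      _ = ENNReal.ofReal (C₀ * s / s ^ 2 + C₀ / (η ^ 2 * s) * (1 - 1/θ)⁻¹) :=
          (ENNReal.ofReal_add (by positivity) (by positivity)).symm
      _ = ENNReal.ofReal ((C₀ / s) * (1 + 1 / (η ^ 2 * (1 - 1 / θ)))) := by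
          congr 1
          have e1 : C₀ * s / s ^ 2 = C₀ / s := by
            field_simp
          have e2 : C₀ / (η ^ 2 * s) * (1 - 1/θ)⁻¹
              = C₀ / s * (1 / (η ^ 2 * (1 - 1 / θ))) := by
            have h3 : η ^ 2 * (1 - 1 / θ) ≠ 0 := by positivity
            field_simp
          rw [e1, e2, mul_add, mul_one]
  exact ENNReal.toReal_le_of_le_ofReal (by positivity) hmain
end

section
/- Let (Omega, P) be a probability space and M : Omega x (0,infinity) -> Z_{>=0} with M_omega nondecreasing in V for each omega, E[M(V)] = V and E[(M(V)-V)^2] <= C_0 * V for each V > 0. Define V_*(omega) = inf{V > 0 : M_omega(V) > 0} and Gamma(omega) = sup_{V >= V_*(omega)} M_omega(V) * V_*(omega) / V (on the event V_* < infinity). Then for every s > 0, theta > 1, eta > 0: P(Gamma > theta*(1+eta)*s) <= (C_0/s) * (1 + 1/(eta^2*(1 - 1/theta))). -/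
open MeasureTheory

/-- First-jump volume `V_*(ω) = inf {V > 0 : M_ω(V) > 0}` of a random counting process. -/
noncomputable def Vstar {Ω : Type*} (M : ℝ → Ω → ℕ) (ω : Ω) : ℝ :=
  sInf {V : ℝ | 0 < V ∧ 0 < M V ω}

/-- Self-normalized supremum `Γ(ω) = sup_{V ≥ V_*(ω)} M_ω(V) V_*(ω) / V`. -/
noncomputable def Gam {Ω : Type*} (M : ℝ → Ω → ℕ) (ω : Ω) : ℝ :=
  sSup {g : ℝ | ∃ V : ℝ, Vstar M ω ≤ V ∧ g = (M V ω : ℝ) * Vstar M ω / V}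

/-- Deterministic pivot lemma: on the good event, `Γ ≤ θ(1+η)s`. -/
lemma gam_le_of_good {Ω : Type*} (M : ℝ → Ω → ℕ) (ω : Ω)
    (hmono : ∀ U V : ℝ, 0 < U → U ≤ V → M U ω ≤ M V ω)
    (s θ η : ℝ) (hs : 0 < s) (hθ : 1 < θ) (hη : 0 < η)
    (h0 : 0 < M s ω)
    (hk : ∀ k : ℕ, (M (s * θ ^ k) ω : ℝ) ≤ (1 + η) * (s * θ ^ k)) :
    Gam M ω ≤ θ * (1 + η) * s := by
  have hθ0 : (0:ℝ) < θ := lt_trans one_pos hθ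
  have hη1 : (0:ℝ) < 1 + η := by linarith
  have hbound0 : (0:ℝ) ≤ θ * (1 + η) * s := by positivity
  have hSne : s ∈ {V : ℝ | 0 < V ∧ 0 < M V ω} := ⟨hs, h0⟩
  have hbdd : BddBelow {V : ℝ | 0 < V ∧ 0 < M V ω} :=
    ⟨0, fun V hV => hV.1.le⟩
  have hV0 : 0 ≤ Vstar M ω := le_csInf ⟨s, hSne⟩ fun V hV => hV.1.le
  have hVs : Vstar M ω ≤ s := csInf_le hbdd hSne
  refine Real.sSup_le ?_ hbound0
  rintro g ⟨V, hVV, rfl⟩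
  rcases eq_or_lt_of_le hV0 with hV0' | hV0'
  · rw [← hV0']
    simp [hbound0]
  · -- 0 < Vstar, hence 0 < V
    have hVpos : 0 < V := lt_of_lt_of_le hV0' hVV
    rcases le_or_gt V s with hVle | hVgt
    · -- V ≤ s : M V ≤ M s ≤ (1+η) s
      have h1 : (M V ω : ℝ) ≤ (1 + η) * s := by
        have := hmono V s hVpos hVle
        have h2 := hk 0
        simp only [pow_zero, mul_one] at h2
        calc (M V ω : ℝ) ≤ (M s ω : ℝ) := by exact_mod_cast this
          _ ≤ (1 + η) * s := h2
      have hfrac : Vstar M ω / V ≤ 1 := div_le_one_of_le₀ hVV hVpos.le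
      calc (M V ω : ℝ) * Vstar M ω / V = (M V ω : ℝ) * (Vstar M ω / V) := by ring
        _ ≤ (1 + η) * s * 1 := by
            apply mul_le_mul h1 hfrac (by positivity) (by positivity)
        _ ≤ θ * (1 + η) * s := by nlinarith
    · -- s < V : locate V in the geometric grid
      have hex : ∃ n : ℕ, V < s * θ ^ n := by
        obtain ⟨n, hn⟩ := pow_unbounded_of_one_lt (V / s) hθ
        exact ⟨n, by rwa [div_lt_iff₀ hs, mul_comm] at hn⟩
      classical
      let n := Nat.find hex
      have hn_spec : V < s * θ ^ n := Nat.find_spec hex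
      have hn_pos : n ≠ 0 := by
        intro h
        have := hn_spec
        rw [h] at this
        simp at this
        linarith
      obtain ⟨k, hkn⟩ : ∃ k, n = k + 1 := ⟨n - 1, (Nat.succ_pred_eq_of_pos (Nat.pos_of_ne_zero hn_pos)).symm⟩
      have hlow : s * θ ^ k ≤ V := by
        by_contra h
        push_neg at h
        exact Nat.find_min hex (by omega : k < n) h
      have hup : V < s * θ ^ (k + 1) := by rwa [hkn] at hn_spec
      -- M V ≤ M(s θ^{k+1}) ≤ (1+η) s θ^{k+1} = θ(1+η)(s θ^k) ≤ θ(1+η)V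
      have hM : (M V ω : ℝ) ≤ θ * (1 + η) * V := by
        have h1 : (M V ω : ℝ) ≤ (M (s * θ ^ (k+1)) ω : ℝ) := by
          exact_mod_cast hmono V (s * θ ^ (k+1)) hVpos hup.le
        have h2 := hk (k + 1)
        have h3 : (1 + η) * (s * θ ^ (k+1)) = θ * (1 + η) * (s * θ ^ k) := by ring
        have h4 : θ * (1 + η) * (s * θ ^ k) ≤ θ * (1 + η) * V := by
          apply mul_le_mul_of_nonneg_left hlow (by positivity)
        linarith
      calc (M V ω : ℝ) * Vstar M ω / V ≤ (θ * (1 + η) * V) * Vstar M ω / V := by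
            gcongr
        _ = θ * (1 + η) * Vstar M ω := by field_simp
        _ ≤ θ * (1 + η) * s := mul_le_mul_of_nonneg_left hVs (by positivity)

/-- Chebyshev step: `P(|M(V) - V| ≥ a)·a² ≤ C₀ V`. -/
lemma cheb_step {Ω : Type*} [MeasurableSpace Ω] (P : Measure Ω) [IsProbabilityMeasure P]
    (M : ℝ → Ω → ℕ) (C₀ : ℝ) (V a : ℝ) (hV : 0 < V) (ha : 0 < a)
    (hint : Integrable (fun ω => ((M V ω : ℝ) - V) ^ 2) P)
    (hvar : ∫ ω, ((M V ω : ℝ) - V) ^ 2 ∂P ≤ C₀ * V)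
    (E : Set Ω) (hE : E ⊆ {ω | a ^ 2 ≤ ((M V ω : ℝ) - V) ^ 2}) :
    (P E).toReal ≤ C₀ * V / a ^ 2 := by
  have h1 : a ^ 2 * (P {ω | a ^ 2 ≤ ((M V ω : ℝ) - V) ^ 2}).toReal
      ≤ ∫ ω, ((M V ω : ℝ) - V) ^ 2 ∂P :=
    mul_meas_ge_le_integral_of_nonneg (ae_of_all _ fun ω => sq_nonneg _) hint _
  have h2 : (P E).toReal ≤ (P {ω | a ^ 2 ≤ ((M V ω : ℝ) - V) ^ 2}).toReal :=
    ENNReal.toReal_mono (measure_ne_top _ _) (measure_mono hE)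
  have ha2 : (0:ℝ) < a ^ 2 := by positivity
  rw [le_div_iff₀ ha2]
  nlinarith [h1, h2, ENNReal.toReal_nonneg (a := P E)]

/-- Abstract pivot inequality: if `M_ω(V)` is nondecreasing in `V` with mean `V` and
variance at most `C₀ V`, then `P(Γ > θ(1+η)s) ≤ (C₀/s)(1 + 1/(η²(1 - 1/θ)))`. -/
theorem stmt5 {Ω : Type*} [MeasurableSpace Ω] (P : Measure Ω) [IsProbabilityMeasure P]
    (M : ℝ → Ω → ℕ) (C₀ : ℝ)
    (hmono : ∀ ω, ∀ U V : ℝ, 0 < U → U ≤ V → M U ω ≤ M V ω)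
    (hmeas : ∀ V : ℝ, 0 < V → Measurable fun ω => M V ω)
    (hmean : ∀ V : ℝ, 0 < V → ∫ ω, (M V ω : ℝ) ∂P = V)
    (hint : ∀ V : ℝ, 0 < V → Integrable (fun ω => ((M V ω : ℝ) - V) ^ 2) P)
    (hvar : ∀ V : ℝ, 0 < V → ∫ ω, ((M V ω : ℝ) - V) ^ 2 ∂P ≤ C₀ * V)
    (s θ η : ℝ) (hs : 0 < s) (hθ : 1 < θ) (hη : 0 < η) :
    (P {ω | θ * (1 + η) * s < Gam M ω}).toReal
      ≤ (C₀ / s) * (1 + 1 / (η ^ 2 * (1 - 1 / θ))) := by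
  have hθ0 : (0:ℝ) < θ := lt_trans one_pos hθ
  have hC₀ : 0 ≤ C₀ := by
    have h1 := hvar 1 one_pos
    have h2 : (0:ℝ) ≤ ∫ ω, ((M 1 ω : ℝ) - 1) ^ 2 ∂P :=
      integral_nonneg fun ω => sq_nonneg _
    linarith
  -- grid volumes
  set Vk : ℕ → ℝ := fun k => s * θ ^ k with hVk
  have hVkpos : ∀ k, 0 < Vk k := fun k => by positivity
  -- bad events
  set A : Set Ω := {ω | M s ω = 0} with hA
  set B : ℕ → Set Ω := fun k => {ω | (1 + η) * Vk k < (M (Vk k) ω : ℝ)} with hB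
  -- inclusion of the pivot event in the bad events
  have hsub : {ω | θ * (1 + η) * s < Gam M ω} ⊆ A ∪ ⋃ k, B k := by
    intro ω hω
    by_contra h
    simp only [Set.mem_union, Set.mem_iUnion, not_or, not_exists] at h
    obtain ⟨hA', hB'⟩ := h
    have h0 : 0 < M s ω := Nat.pos_of_ne_zero hA'
    have hk : ∀ k : ℕ, (M (s * θ ^ k) ω : ℝ) ≤ (1 + η) * (s * θ ^ k) := by
      intro k
      have := hB' k
      simp only [hB, Set.mem_setOf_eq, not_lt] at this
      exact this
    exact absurd (gam_le_of_good M ω (hmono ω) s θ η hs hθ hη h0 hk) (not_le.mpr hω)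
  -- Chebyshev bounds
  have hPA : (P A).toReal ≤ C₀ / s := by
    have h := cheb_step P M C₀ s s hs hs (hint s hs) (hvar s hs) A ?_
    · calc (P A).toReal ≤ C₀ * s / s ^ 2 := h
        _ = C₀ / s := by field_simp
    · intro ω hω
      simp only [hA, Set.mem_setOf_eq] at hω ⊢
      rw [hω]
      simp
  have hPB : ∀ k, (P (B k)).toReal ≤ C₀ / (η ^ 2 * s) * (1 / θ) ^ k := by
    intro k
    have h := cheb_step P M C₀ (Vk k) (η * Vk k) (hVkpos k) (by positivity)
      (hint _ (hVkpos k)) (hvar _ (hVkpos k)) (B k) ?_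
    · calc (P (B k)).toReal ≤ C₀ * Vk k / (η * Vk k) ^ 2 := h
        _ = C₀ / (η ^ 2 * s) * (1 / θ) ^ k := by
            simp only [hVk]
            rw [div_pow, one_pow]
            have : θ ^ k ≠ 0 := by positivity
            field_simp
    · intro ω hω
      simp only [hB, Set.mem_setOf_eq] at hω
      simp only [Set.mem_setOf_eq]
      have h1 : η * Vk k ≤ (M (Vk k) ω : ℝ) - Vk k := by nlinarith [hVkpos k]
      have h2 : 0 ≤ η * Vk k := by positivity
      nlinarith
  -- convert to ENNReal bounds
  have hPA' : P A ≤ ENNReal.ofReal (C₀ / s) :=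
    (ENNReal.le_ofReal_iff_toReal_le (measure_ne_top _ _) (by positivity)).2 hPA
  have hPB' : ∀ k, P (B k) ≤ ENNReal.ofReal (C₀ / (η ^ 2 * s) * (1 / θ) ^ k) := fun k =>
    (ENNReal.le_ofReal_iff_toReal_le (measure_ne_top _ _) (by positivity)).2 (hPB k)
  -- geometric summation
  have hr0 : (0:ℝ) ≤ 1 / θ := by positivity
  have hr1 : 1 / θ < 1 := by rw [div_lt_one hθ0]; exact hθ
  have hsum : Summable fun k : ℕ => C₀ / (η ^ 2 * s) * (1 / θ) ^ k :=
    (summable_geometric_of_lt_one hr0 hr1).mul_left _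
  have htsum : ∑' k : ℕ, C₀ / (η ^ 2 * s) * (1 / θ) ^ k
      = C₀ / (η ^ 2 * s) * (1 - 1 / θ)⁻¹ := by
    rw [tsum_mul_left, tsum_geometric_of_lt_one hr0 hr1]
  have hmain : P {ω | θ * (1 + η) * s < Gam M ω}
      ≤ ENNReal.ofReal (C₀ / s) + ENNReal.ofReal (C₀ / (η ^ 2 * s) * (1 - 1 / θ)⁻¹) := by
    calc P {ω | θ * (1 + η) * s < Gam M ω} ≤ P (A ∪ ⋃ k, B k) := measure_mono hsub
      _ ≤ P A + P (⋃ k, B k) := measure_union_le _ _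
      _ ≤ P A + ∑' k, P (B k) := by gcongr; exact measure_iUnion_le _
      _ ≤ ENNReal.ofReal (C₀ / s)
            + ∑' k, ENNReal.ofReal (C₀ / (η ^ 2 * s) * (1 / θ) ^ k) :=
          add_le_add hPA' (ENNReal.tsum_le_tsum hPB')
      _ = ENNReal.ofReal (C₀ / s) + ENNReal.ofReal (C₀ / (η ^ 2 * s) * (1 - 1 / θ)⁻¹) := by
          rw [← ENNReal.ofReal_tsum_of_nonneg (fun k => by positivity) hsum, htsum]
  have h1θ : (0:ℝ) < 1 - 1 / θ := by
    have : 1 / θ < 1 := hr1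
    linarith
  have hθne : θ ≠ 0 := ne_of_gt hθ0
  have hθ1ne : θ - 1 ≠ 0 := by intro h; nlinarith
  have hsne : s ≠ 0 := ne_of_gt hs
  have hηne : η ≠ 0 := ne_of_gt hη
  have hRHS : C₀ / s + C₀ / (η ^ 2 * s) * (1 - 1 / θ)⁻¹
      = (C₀ / s) * (1 + 1 / (η ^ 2 * (1 - 1 / θ))) := by
    rw [show (1 : ℝ) - 1 / θ = (θ - 1) / θ by field_simp]
    field_simp
  calc (P {ω | θ * (1 + η) * s < Gam M ω}).toReal
      ≤ (ENNReal.ofReal (C₀ / s) + ENNReal.ofReal (C₀ / (η ^ 2 * s) * (1 - 1 / θ)⁻¹)).toReal :=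
        ENNReal.toReal_mono (by finiteness) hmain
    _ = C₀ / s + C₀ / (η ^ 2 * s) * (1 - 1 / θ)⁻¹ := by
        rw [ENNReal.toReal_add ENNReal.ofReal_ne_top ENNReal.ofReal_ne_top,
          ENNReal.toReal_ofReal (by positivity),
          ENNReal.toReal_ofReal
            (mul_nonneg (by positivity) (inv_nonneg.2 h1θ.le))]
    _ = (C₀ / s) * (1 + 1 / (η ^ 2 * (1 - 1 / θ))) := hRHS
end
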